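/- For 0<q<1, positive integers n,k with k≤n, and a nonnegative integer a, the following summation identity holds: ([n-1 choose k]_q/[n-1+k choose k]_q) · ∑_{l=0}^{a} ([n]_q^{2l}/[k]_q^{2l}) q^{(k-n)l} = ([n choose k]_q/[n+k choose k]_q) · ( ([n]_q^{2a}/[k]_q^{2a}) q^{(k-n)a} − ([k]_q^2/[n]_q^2) q^{n-k} ). -/

import Mathlib

open Finset

/-- q-analogue of a natural number: [m]_q = (1-q^m)/(1-q). -/
noncomputable def qnum (q : ℝ) (m : ℕ) : ℝ := (1 - q ^ m) / (1 - q)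

/-- q-Pochhammer (q;q)_n = ∏_{k=0}^{n-1} (1 - q^{k+1}). -/
noncomputable def qPoch (q : ℝ) (n : ℕ) : ℝ := ∏ k ∈ Finset.range n, (1 - q ^ (k + 1))

/-- Gaussian q-binomial coefficient, 0 when m > n. -/
noncomputable def qbinom (q : ℝ) (n m : ℕ) : ℝ :=
  if m ≤ n then qPoch q n / (qPoch q m * qPoch q (n - m)) else 0

/-- q-multiple harmonic star sum H_n^*[s₁,…,s_m]. -/
noncomputable def qHstar (q : ℝ) : List ℕ → ℕ → ℝ
  | [], _ => 1
  | s :: rest, n => ∑ k ∈ Finset.Icc 1 n, q ^ k / qnum q k ^ s * qHstar q rest k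

/-- q-multiple zeta star value ζ_q^*[s₁,…,s_m]. -/
noncomputable def qZetaStar (q : ℝ) : List ℕ → ℝ
  | [] => 1
  | s :: rest => ∑' k : ℕ, q ^ (k + 1) / qnum q (k + 1) ^ s * qHstar q rest (k + 1)

/-- strict multiple harmonic sum ∑_{n ≥ k₁ > … > k_r ≥ 1} ∏ 1/k_j^{p_j}. -/
noncomputable def Hstrict : List ℕ → ℕ → ℝ
  | [], _ => 1
  | p :: rest, n => ∑ k ∈ Finset.Icc 1 n, (1 : ℝ) / (k : ℝ) ^ p * Hstrict rest (k - 1)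

/-- binomial-weighted strict multiple harmonic sum Ĥ_n(p). -/
noncomputable def Hhat : List ℕ → ℕ → ℝ
  | [], _ => 1
  | p :: rest, n => ∑ k ∈ Finset.Icc 1 n,
      ((n.choose k : ℝ) / ((n + k).choose n)) * ((1 : ℝ) / (k : ℝ) ^ p) * Hstrict rest (k - 1)

/-- ordinary multiple harmonic star sum H_n^*(s₁,…,s_m). -/
noncomputable def HstarO : List ℕ → ℕ → ℝ
  | [], _ => 1
  | s :: rest, n => ∑ k ∈ Finset.Icc 1 n, (1 : ℝ) / (k : ℝ) ^ s * HstarO rest k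

/-- ordinary multiple zeta star value. -/
noncomputable def zetaStarO : List ℕ → ℝ
  | [] => 1
  | s :: rest => ∑' k : ℕ, (1 : ℝ) / ((k : ℝ) + 1) ^ s * HstarO rest (k + 1)

/-- Merge a list of parts according to a comma(true)/plus(false) pattern. -/
def mergeComp : ℕ → List ℕ → List Bool → List ℕ
  | a, [], _ => [a]
  | a, _ :: _, [] => [a]
  | a, b :: t, true :: bs => a :: mergeComp b t bs
  | a, b :: t, false :: bs => mergeComp (a + b) t bs

lemma qPoch_pos {q : ℝ} (hq0 : 0 < q) (hq1 : q < 1) (n : ℕ) : 0 < qPoch q n := by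
  apply Finset.prod_pos
  intro i _
  have : q ^ (i + 1) < 1 := pow_lt_one₀ hq0.le hq1 (by omega)
  linarith

lemma one_sub_pow_pos {q : ℝ} (hq0 : 0 < q) (hq1 : q < 1) {m : ℕ} (hm : 1 ≤ m) :
    0 < 1 - q ^ m := by
  have : q ^ m < 1 := pow_lt_one₀ hq0.le hq1 (by omega)
  linarith

lemma qPoch_succ (q : ℝ) (m : ℕ) : qPoch q (m + 1) = qPoch q m * (1 - q ^ (m + 1)) := by
  simp [qPoch, Finset.prod_range_succ]

theorem stmt8 (q : ℝ) (hq0 : 0 < q) (hq1 : q < 1) (n k a : ℕ) (hn : 1 ≤ n) (hk : 1 ≤ k)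
    (hkn : k ≤ n) :
    (qbinom q (n - 1) k / qbinom q (n - 1 + k) k) *
      ∑ l ∈ Finset.range (a + 1), qnum q n ^ (2 * l) / (qnum q k ^ (2 * l) * q ^ ((n - k) * l))
    = (qbinom q n k / qbinom q (n + k) k) *
        (qnum q n ^ (2 * a) / (qnum q k ^ (2 * a) * q ^ ((n - k) * a))
          - qnum q k ^ 2 / qnum q n ^ 2 * q ^ (n - k)) := by
  have h1q : (1 : ℝ) - q ≠ 0 := by linarith
  have hqne : q ≠ 0 := ne_of_gt hq0
  have hun : (1:ℝ) - q ^ n ≠ 0 := ne_of_gt (one_sub_pow_pos hq0 hq1 hn)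
  have huk : (1:ℝ) - q ^ k ≠ 0 := ne_of_gt (one_sub_pow_pos hq0 hq1 hk)
  have hqnn : qnum q n ≠ 0 := div_ne_zero hun h1q
  have hqnk : qnum q k ≠ 0 := div_ne_zero huk h1q
  set x : ℝ := qnum q n ^ 2 / (qnum q k ^ 2 * q ^ (n - k)) with hxdef
  have hxne : x ≠ 0 :=
    div_ne_zero (pow_ne_zero _ hqnn) (mul_ne_zero (pow_ne_zero _ hqnk) (pow_ne_zero _ hqne))
  have hterm : ∀ l : ℕ, qnum q n ^ (2 * l) / (qnum q k ^ (2 * l) * q ^ ((n - k) * l)) = x ^ l := by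
    intro l
    rw [hxdef, div_pow, mul_pow, ← pow_mul, ← pow_mul, ← pow_mul]
  rw [Finset.sum_congr rfl (fun l _ => hterm l), hterm a]
  -- key lemma
  have hkey : (qbinom q (n - 1) k / qbinom q (n - 1 + k) k) * x
      = (qbinom q n k / qbinom q (n + k) k) * (x - 1) := by
    rcases eq_or_lt_of_le hkn with heq | hlt
    · subst heq
      have hC' : qbinom q (k - 1) k = 0 := by
        unfold qbinom; rw [if_neg]; omega
      have hx1 : x = 1 := by
        rw [hxdef]
        simp only [Nat.sub_self, pow_zero, mul_one]
        field_simp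
      rw [hC', hx1]
      simp
    · -- k < n
      have hb1 : qbinom q (n - 1) k = qPoch q (n-1) / (qPoch q k * qPoch q (n-1-k)) := by
        unfold qbinom; rw [if_pos (by omega)]
      have hb2 : qbinom q (n - 1 + k) k = qPoch q (n-1+k) / (qPoch q k * qPoch q (n-1)) := by
        unfold qbinom; rw [if_pos (by omega), Nat.add_sub_cancel]
      have hb3 : qbinom q n k = qPoch q n / (qPoch q k * qPoch q (n-k)) := by
        unfold qbinom; rw [if_pos hkn]
      have hb4 : qbinom q (n + k) k = qPoch q (n+k) / (qPoch q k * qPoch q n) := by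
        unfold qbinom; rw [if_pos (by omega), Nat.add_sub_cancel]
      have hA : qPoch q n = qPoch q (n-1) * (1 - q ^ n) := by
        have := qPoch_succ q (n-1); rw [show n-1+1 = n by omega] at this; exact this
      have hB : qPoch q (n+k) = qPoch q (n-1+k) * (1 - q ^ (n+k)) := by
        have := qPoch_succ q (n-1+k); rw [show n-1+k+1 = n+k by omega] at this; exact this
      have hD : qPoch q (n-k) = qPoch q (n-1-k) * (1 - q ^ (n-k)) := by
        have := qPoch_succ q (n-1-k)
        rw [show n-1-k+1 = n-k by omega, show n-1-k = n-k-1 by omega] at this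
        rw [this, show n-k-1 = n-1-k by omega]
      have hPk := (qPoch_pos hq0 hq1 k).ne'
      have hPA := (qPoch_pos hq0 hq1 (n-1)).ne'
      have hPB := (qPoch_pos hq0 hq1 (n-1+k)).ne'
      have hPD := (qPoch_pos hq0 hq1 (n-1-k)).ne'
      have hunk : (1:ℝ) - q ^ (n-k) ≠ 0 := ne_of_gt (one_sub_pow_pos hq0 hq1 (by omega))
      have hunpk : (1:ℝ) - q ^ (n+k) ≠ 0 := ne_of_gt (one_sub_pow_pos hq0 hq1 (by omega))
      have hr : q ^ n = q ^ (n-k) * q ^ k := by rw [← pow_add]; congr 1; omega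
      have hr2 : q ^ (n+k) = q ^ (n-k) * q ^ k * q ^ k := by
        rw [mul_assoc, ← pow_add, ← pow_add]; congr 1; omega
      rw [hb1, hb2, hb3, hb4, hA, hB, hD, hxdef]
      unfold qnum
      rw [hr, hr2]
      have hqk : q ^ k ≠ 0 := pow_ne_zero _ hqne
      have hqnk' : q ^ (n-k) ≠ 0 := pow_ne_zero _ hqne
      have hun' : (1:ℝ) - q ^ (n-k) * q ^ k ≠ 0 := by rw [← hr]; exact hun
      have hunpk' : (1:ℝ) - q ^ (n-k) * q ^ k * q ^ k ≠ 0 := by rw [← hr2]; exact hunpk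
      have hunpk'' : (1:ℝ) - q ^ (n-k) * q ^ (k*2) ≠ 0 := by rw [mul_comm k 2, pow_mul', sq, ← mul_assoc]; exact hunpk'
      field_simp
      ring_nf
      field_simp
      ring
  -- finish via geometric sum
  have hyx : qnum q k ^ 2 / qnum q n ^ 2 * q ^ (n - k) = x⁻¹ := by
    rw [hxdef]
    field_simp
  rw [hyx]
  apply mul_right_cancel₀ hxne
  calc (qbinom q (n - 1) k / qbinom q (n - 1 + k) k) * (∑ l ∈ Finset.range (a+1), x ^ l) * x
      = ((qbinom q (n - 1) k / qbinom q (n - 1 + k) k) * x) * (∑ l ∈ Finset.range (a+1), x ^ l) := by ring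
    _ = ((qbinom q n k / qbinom q (n + k) k) * (x - 1)) * (∑ l ∈ Finset.range (a+1), x ^ l) := by rw [hkey]
    _ = (qbinom q n k / qbinom q (n + k) k) * ((∑ l ∈ Finset.range (a+1), x ^ l) * (x - 1)) := by ring
    _ = (qbinom q n k / qbinom q (n + k) k) * (x ^ (a+1) - 1) := by rw [geom_sum_mul]
    _ = (qbinom q n k / qbinom q (n + k) k) * (x ^ a * x - x⁻¹ * x) := by
        rw [inv_mul_cancel₀ hxne, pow_succ]
    _ = (qbinom q n k / qbinom q (n + k) k) * (x ^ a - x⁻¹) * x := by ring
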